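/- Let E be a group, A an abelian normal subgroup of E, and G = E/A. The automorphisms of E inducing the identity on A and on G form a subgroup of the automorphism group of E, and the assignment φ ↦ ψ_φ, where ψ_φ(uA) = φ(u)·u⁻¹, is a group isomorphism from this subgroup onto the group Z¹(G, A) of crossed homomorphisms G → A (with pointwise multiplication). -/

import Mathlib

/-- The predicate on automorphisms of `E`: `φ` induces the identity on the
normal subgroup `A` and on the quotient `G = E/A`. -/
def InducesIdOn {E : Type*} [Group E] (A : Subgroup E) (φ : MulAut E) : Prop :=
  (∀ a ∈ A, φ a = a) ∧ (∀ u : E, φ u * u⁻¹ ∈ A)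

/-- The predicate on functions `f : E → E` expressing that `f` is (the lift of)
a crossed homomorphism `G = E/A → A` for the conjugation action of `G` on `A`:
its values lie in `A`, it only depends on the coset modulo `A`, and it satisfies
the cocycle condition `ψ(gh) = ψ(g) · (g • ψ(h))` with `g • a = u a u⁻¹`. -/
def IsCrossedHom {E : Type*} [Group E] (A : Subgroup E) (f : E → E) : Prop :=
  (∀ u : E, f u ∈ A) ∧
  (∀ u v : E, u⁻¹ * v ∈ A → f u = f v) ∧
  (∀ u v : E, f (u * v) = f u * (u * f v * u⁻¹))

/-- The automorphisms of `E` inducing the identity on the abelian normal subgroup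
`A` and on `G = E/A` form a subgroup of `Aut(E)`, and `φ ↦ (ψ_φ : uA ↦ φ(u)·u⁻¹)`
is a group isomorphism from this subgroup onto the group `Z¹(G,A)` of crossed
homomorphisms `G → A` with pointwise multiplication. -/
theorem stmt_3 {E : Type*} [Group E] (A : Subgroup E) [A.Normal]
    (hab : ∀ a ∈ A, ∀ b ∈ A, a * b = b * a) :
    -- the automorphisms inducing the identity on `A` and on `G` form a subgroup
    (InducesIdOn A (1 : MulAut E)) ∧
    (∀ φ φ' : MulAut E, InducesIdOn A φ → InducesIdOn A φ' → InducesIdOn A (φ * φ')) ∧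
    (∀ φ : MulAut E, InducesIdOn A φ → InducesIdOn A φ⁻¹) ∧
    -- the crossed homomorphisms form a group under pointwise multiplication
    (IsCrossedHom A (fun _ => (1 : E))) ∧
    (∀ f f' : E → E, IsCrossedHom A f → IsCrossedHom A f' →
      IsCrossedHom A (fun u => f u * f' u)) ∧
    (∀ f : E → E, IsCrossedHom A f → IsCrossedHom A (fun u => (f u)⁻¹)) ∧
    -- `φ ↦ ψ_φ` is multiplicative: `ψ_{φφ'} = ψ_φ · ψ_{φ'}` pointwise
    (∀ φ φ' : MulAut E, InducesIdOn A φ → InducesIdOn A φ' →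
      ∀ u : E, (φ * φ') u * u⁻¹ = (φ u * u⁻¹) * (φ' u * u⁻¹)) ∧
    -- `φ ↦ ψ_φ` maps the subgroup into `Z¹(G,A)`, injectively ...
    (∀ φ : MulAut E, InducesIdOn A φ → IsCrossedHom A (fun u => φ u * u⁻¹)) ∧
    (∀ φ φ' : MulAut E, InducesIdOn A φ → InducesIdOn A φ' →
      (∀ u : E, φ u * u⁻¹ = φ' u * u⁻¹) → φ = φ') ∧
    -- ... and surjectively
    (∀ f : E → E, IsCrossedHom A f →
      ∃ φ : MulAut E, InducesIdOn A φ ∧ ∀ u : E, φ u * u⁻¹ = f u) := by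
  constructor
  · exact ⟨fun a _ => rfl, fun u => by simp [A.one_mem]⟩
  refine ⟨?_, ?_, ?_, ?_, ?_, ?_, ?_, ?_, ?_⟩
  · rintro φ φ' ⟨h1, h2⟩ ⟨h1', h2'⟩
    constructor
    · intro a ha; simp [h1' a ha, h1 a ha]
    · intro u
      have : (φ * φ') u * u⁻¹ = φ (φ' u * u⁻¹) * (φ u * u⁻¹) := by
        simp [map_mul, mul_assoc]
      rw [this]
      exact A.mul_mem (by rw [h1 _ (h2' u)]; exact h2' u) (h2 u)
  · rintro φ ⟨h1, h2⟩
    constructor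
    · intro a ha
      have := h1 a ha
      calc φ⁻¹ a = φ⁻¹ (φ a) := by rw [this]
      _ = a := φ.symm_apply_apply a
    · intro u
      have key : u * (φ⁻¹ u)⁻¹ ∈ A := by
        have := h2 (φ⁻¹ u)
        rwa [show φ (φ⁻¹ u) = u from φ.apply_symm_apply u] at this
      have := A.inv_mem key
      simpa using this
  · exact ⟨fun u => A.one_mem, fun u v _ => rfl, fun u v => by simp⟩
  · rintro f f' ⟨hm, hc, hz⟩ ⟨hm', hc', hz'⟩
    refine ⟨fun u => A.mul_mem (hm u) (hm' u), fun u v h => by show f u * f' u = f v * f' v; rw [hc u v h, hc' u v h], ?_⟩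
    intro u v
    have comm : (u * f v * u⁻¹) * f' u = f' u * (u * f v * u⁻¹) :=
      hab _ (Subgroup.Normal.conj_mem ‹A.Normal› _ (hm v) u) _ (hm' u)
    calc f (u * v) * f' (u * v) = f u * (u * f v * u⁻¹) * (f' u * (u * f' v * u⁻¹)) := by
          rw [hz, hz']
    _ = f u * ((u * f v * u⁻¹) * f' u) * (u * f' v * u⁻¹) := by group
    _ = f u * (f' u * (u * f v * u⁻¹)) * (u * f' v * u⁻¹) := by rw [comm]
    _ = f u * f' u * (u * (f v * f' v) * u⁻¹) := by group
  · rintro f ⟨hm, hc, hz⟩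
    refine ⟨fun u => A.inv_mem (hm u), fun u v h => by show (f u)⁻¹ = (f v)⁻¹; rw [hc u v h], ?_⟩
    intro u v
    have comm : (f u)⁻¹ * (u * (f v)⁻¹ * u⁻¹) = (u * (f v)⁻¹ * u⁻¹) * (f u)⁻¹ :=
      hab _ (A.inv_mem (hm u)) _ (Subgroup.Normal.conj_mem ‹A.Normal› _ (A.inv_mem (hm v)) u)
    calc (f (u * v))⁻¹ = (f u * (u * f v * u⁻¹))⁻¹ := by rw [hz]
    _ = (u * (f v)⁻¹ * u⁻¹) * (f u)⁻¹ := by group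
    _ = (f u)⁻¹ * (u * (f v)⁻¹ * u⁻¹) := comm.symm
  · rintro φ φ' ⟨h1, h2⟩ ⟨h1', h2'⟩ u
    have e1 : (φ * φ') u * u⁻¹ = (φ' u * u⁻¹) * (φ u * u⁻¹) := by
      have : (φ * φ') u = φ (φ' u * u⁻¹) * φ u := by simp [map_mul, mul_assoc]
      rw [this, h1 _ (h2' u)]; group
    rw [e1, hab _ (h2' u) _ (h2 u)]
  · rintro φ ⟨h1, h2⟩
    refine ⟨h2, ?_, ?_⟩
    · intro u v h
      show φ u * u⁻¹ = φ v * v⁻¹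
      have hv : v = u * (u⁻¹ * v) := by group
      rw [hv, map_mul, h1 _ h]
      group
    · intro u v
      show φ (u * v) * (u * v)⁻¹ = (φ u * u⁻¹) * (u * (φ v * v⁻¹) * u⁻¹)
      rw [map_mul]; group
  · rintro φ φ' _ _ h
    ext u
    have := h u
    exact mul_right_cancel (by rw [this])
  · rintro f hf
    obtain ⟨hm, hc, hz⟩ := hf
    have hf1 : f 1 = 1 := by
      have h := hz 1 1
      simp only [one_mul, mul_one, inv_one] at h
      exact left_eq_mul.mp h
    -- f a = 1 for a ∈ A
    have hfa : ∀ a ∈ A, f a = 1 := by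
      intro a ha
      rw [hc a 1 (by simpa using A.inv_mem ha), hf1]
    -- coset invariance variant
    have hcos : ∀ u a, a ∈ A → f (a * u) = f u := by
      intro u a ha
      refine hc (a * u) u ?_
      have := Subgroup.Normal.conj_mem ‹A.Normal› _ (A.inv_mem ha) u⁻¹
      simpa [mul_assoc] using this
    set φfun : E → E := fun u => f u * u with hφfun
    have hmul : ∀ u v, φfun (u * v) = φfun u * φfun v := by
      intro u v
      simp only [hφfun, hz u v]
      group
    have hinv : ∀ u, φfun ((f u)⁻¹ * u) = u := by
      intro u
      have : f ((f u)⁻¹ * u) = f u := hcos u _ (A.inv_mem (hm u))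
      simp only [hφfun, this]; group
    have hinv2 : ∀ u, (f (φfun u))⁻¹ * φfun u = u := by
      intro u
      have : f (φfun u) = f u := hcos u _ (hm u)
      rw [this]; simp only [hφfun]; group
    refine ⟨{ toFun := φfun, invFun := fun u => (f u)⁻¹ * u,
              left_inv := fun u => hinv2 u, right_inv := fun u => hinv u,
              map_mul' := hmul }, ⟨?_, ?_⟩, ?_⟩
    · intro a ha
      show φfun a = a
      simp [hφfun, hfa a ha]
    · intro u
      show φfun u * u⁻¹ ∈ A
      simpa [hφfun] using hm u
    · intro u
      show φfun u * u⁻¹ = f u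
      simp [hφfun]
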